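/- Let y : [0,∞) → ℝ be a nonnegative differentiable function with y'(t) ≤ c·y(t)³ for a constant c ≥ 0, and suppose M := c·∫₀^∞ y(s) ds + arctan(y(0)) < π/2. Then y(t) ≤ tan(M) for all t ≥ 0; in particular y is uniformly bounded. -/

import Mathlib

open Real MeasureTheory

theorem bounded_of_arctan_smallness (c : ℝ) (hc : 0 ≤ c) (y y' : ℝ → ℝ)
    (hderiv : ∀ t ∈ Set.Ici (0:ℝ), HasDerivAt y (y' t) t)
    (hnonneg : ∀ t ∈ Set.Ici (0:ℝ), 0 ≤ y t)
    (hineq : ∀ t ∈ Set.Ici (0:ℝ), y' t ≤ c * (y t) ^ 3)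
    (hint : IntegrableOn y (Set.Ioi (0:ℝ)))
    (M : ℝ) (hM : M = c * (∫ s in Set.Ioi (0:ℝ), y s) + Real.arctan (y 0))
    (hMlt : M < Real.pi / 2) :
    ∀ t ∈ Set.Ici (0:ℝ), y t ≤ Real.tan M := by
  intro t ht
  have hycont : ∀ s ∈ Set.Ici (0:ℝ), ContinuousAt y s := fun s hs =>
    (hderiv s hs).continuousAt
  set g : ℝ → ℝ := fun s => c * y (max s 0) with hg
  have hgcont : Continuous g := by
    rw [continuous_iff_continuousAt]
    intro s
    have : ContinuousAt (fun s : ℝ => max s 0) s :=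
      (continuous_id.max continuous_const).continuousAt
    exact continuousAt_const.mul
      (ContinuousAt.comp (hycont (max s 0) (le_max_right s 0)) this)
  have hgeq : ∀ s ∈ Set.Ici (0:ℝ), g s = c * y s := by
    intro s hs; simp [hg, max_eq_left (Set.mem_Ici.mp hs)]
  set F : ℝ → ℝ := fun u => ∫ s in (0:ℝ)..u, g s with hF
  have hFderiv : ∀ u : ℝ, HasDerivAt F (g u) u := by
    intro u
    exact intervalIntegral.integral_hasDerivAt_right (hgcont.intervalIntegrable 0 u)
      (hgcont.stronglyMeasurableAtFilter _ _) hgcont.continuousAt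
  set h : ℝ → ℝ := fun u => F u - Real.arctan (y u) with hh
  have hhderiv : ∀ u ∈ Set.Ici (0:ℝ),
      HasDerivAt h (g u - 1 / (1 + y u ^ 2) * y' u) u := by
    intro u hu
    exact (hFderiv u).sub ((hderiv u hu).arctan)
  have hmono : MonotoneOn h (Set.Ici (0:ℝ)) := by
    apply monotoneOn_of_deriv_nonneg (convex_Ici 0)
    · exact fun u hu => ((hhderiv u hu).continuousAt).continuousWithinAt
    · intro u hu
      rw [interior_Ici] at hu
      exact ((hhderiv u (Set.mem_Ici.mpr (le_of_lt (Set.mem_Ioi.mp hu)))).differentiableAt).differentiableWithinAt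
    · intro u hu
      rw [interior_Ici] at hu
      have hu' : u ∈ Set.Ici (0:ℝ) := Set.mem_Ici.mpr (le_of_lt (Set.mem_Ioi.mp hu))
      rw [(hhderiv u hu').deriv]
      have hy := hnonneg u hu'
      have h1 : (0:ℝ) < 1 + y u ^ 2 := by positivity
      rw [hgeq u hu', sub_nonneg, one_div, inv_mul_le_iff₀ h1]
      calc y' u ≤ c * y u ^ 3 := hineq u hu'
        _ ≤ (1 + y u ^ 2) * (c * y u) := by nlinarith [sq_nonneg (y u)]
  have hkey : Real.arctan (y t) ≤ M := by
    have h0t : h 0 ≤ h t := hmono (Set.self_mem_Ici) ht ht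
    have hF0 : F 0 = 0 := intervalIntegral.integral_same
    have hFt : F t = c * ∫ s in Set.Ioc (0:ℝ) t, y s := by
      show (∫ s in (0:ℝ)..t, g s) = _
      rw [intervalIntegral.integral_of_le ht, ← integral_const_mul]
      apply setIntegral_congr_fun measurableSet_Ioc
      intro s hs
      exact hgeq s (Set.mem_Ici.mpr (le_of_lt hs.1))
    have hsub : (∫ s in Set.Ioc (0:ℝ) t, y s) ≤ ∫ s in Set.Ioi (0:ℝ), y s := by
      apply setIntegral_mono_set hint
      · filter_upwards [ae_restrict_mem measurableSet_Ioi] with s hs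
        exact hnonneg s (Set.mem_Ici.mpr (le_of_lt (Set.mem_Ioi.mp hs)))
      · exact Filter.Eventually.of_forall (fun s hs => hs.1)
    have harct : Real.arctan (y t) ≤ F t + Real.arctan (y 0) := by
      simp only [hh, hF0] at h0t; linarith
    rw [hM]
    calc Real.arctan (y t) ≤ F t + Real.arctan (y 0) := harct
      _ ≤ c * (∫ s in Set.Ioi (0:ℝ), y s) + Real.arctan (y 0) := by
          rw [hFt]; gcongr
  have h1 : Real.arctan (y t) ∈ Set.Ioo (-(Real.pi/2)) (Real.pi/2) :=
    ⟨Real.neg_pi_div_two_lt_arctan _, Real.arctan_lt_pi_div_two _⟩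
  have h2 : M ∈ Set.Ioo (-(Real.pi/2)) (Real.pi/2) :=
    ⟨lt_of_lt_of_le h1.1 hkey, hMlt⟩
  have := Real.strictMonoOn_tan.monotoneOn h1 h2 hkey
  rwa [Real.tan_arctan] at this
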